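/- Suppose s ≥ 1, or suppose s > 0 and the network is complete (c_{i,j} > 0 for all i ≠ j). Let V : [0,∞) → ℝ^N be a solution of the volume-scavenging system with V_j(0) ≥ 0 for all 1 ≤ j ≤ N and (1/N) Σ_{j=1}^N V_j(0) = V̄ > 0. Then V_j(t) ≥ 0 for all t ≥ 0 and all 1 ≤ j ≤ N. -/

import Mathlib

/-- Droplet volume as a function of height: v(h) = h(h²+3)/4. -/
noncomputable def vol (h : ℝ) : ℝ := h * (h ^ 2 + 3) / 4

/-- Droplet pressure as a function of height: p(h) = 4h/(h²+1). -/
noncomputable def pres (h : ℝ) : ℝ := 4 * h / (h ^ 2 + 1)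

/-- Pressure as a function of volume: P(V) = p(h) where v(h) = V
(v is a strictly increasing bijection of ℝ, so its inverse is well defined). -/
noncomputable def Pfun (V : ℝ) : ℝ := pres (Function.invFun vol V)

/-- Δ_s(x) = |x|^s sgn(x). -/
noncomputable def Ds (s x : ℝ) : ℝ := |x| ^ s * Real.sign x

lemma vol_strictMono : StrictMono vol := by
  intro x y hxy
  have h : vol y - vol x = (y - x) * ((x + y/2)^2 + 3*y^2/4 + 3) / 4 := by
    simp only [vol]; ring
  nlinarith [sq_nonneg (x + y/2), sq_nonneg y]

lemma vol_cont : Continuous vol := by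
  unfold vol; continuity

lemma vol_surj : Function.Surjective vol := by
  intro y
  have h1 : vol (-(2*|y|+2)) ≤ y := by
    have h2 : -(2*|y|+2) ≤ y := by
      have := abs_nonneg y; have := neg_abs_le y; linarith
    have : vol (-(2*|y|+2)) ≤ -(2*|y|+2) := by
      simp only [vol]; nlinarith [abs_nonneg y, sq_nonneg (2*|y|+2)]
    linarith
  have h2 : y ≤ vol (2*|y|+2) := by
    have h2 : y ≤ 2*|y|+2 := by have := abs_nonneg y; have := le_abs_self y; linarith
    have : 2*|y|+2 ≤ vol (2*|y|+2) := by
      simp only [vol]; nlinarith [abs_nonneg y, sq_nonneg (2*|y|+2)]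
    linarith
  exact intermediate_value_univ (-(2*|y|+2)) (2*|y|+2) vol_cont ⟨h1, h2⟩

lemma vol_invFun_eq (y : ℝ) : vol (Function.invFun vol y) = y :=
  Function.invFun_eq (vol_surj y)

lemma vol_zero : vol 0 = 0 := by simp [vol]

lemma invFun_vol_zero : Function.invFun vol (0:ℝ) = 0 :=
  vol_strictMono.injective (by rw [vol_invFun_eq, vol_zero])

lemma invFun_vol_lip (a b : ℝ) :
    |Function.invFun vol a - Function.invFun vol b| ≤ (4/3) * |a - b| := by
  set x := Function.invFun vol a
  set y := Function.invFun vol b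
  have hab : a - b = vol x - vol y := by rw [vol_invFun_eq, vol_invFun_eq]
  have hv : vol x - vol y = (x - y) * ((x + y/2)^2 + 3*y^2/4 + 3) / 4 := by
    simp only [vol]; ring
  have hQ : (3:ℝ) ≤ (x + y/2)^2 + 3*y^2/4 + 3 := by nlinarith [sq_nonneg (x+y/2), sq_nonneg y]
  rw [hab, hv, abs_div, abs_mul]
  rw [abs_of_pos (by linarith : (0:ℝ) < (x + y/2)^2 + 3*y^2/4 + 3)]
  rw [abs_of_pos (by norm_num : (0:ℝ) < 4)]
  nlinarith [abs_nonneg (x - y)]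

lemma pres_lip (a b : ℝ) : |pres a - pres b| ≤ 8 * |a - b| := by
  have hD : (0:ℝ) < (a^2+1)*(b^2+1) := by positivity
  have h1 : pres a - pres b = 4*(a-b)*(1-a*b)/((a^2+1)*(b^2+1)) := by
    simp only [pres]; field_simp; ring
  rw [h1, abs_div, abs_of_pos hD, div_le_iff₀ hD]
  have h2 : |4*(a-b)*(1-a*b)| = 4 * |a-b| * |1-a*b| := by
    rw [abs_mul, abs_mul]; norm_num
  rw [h2]
  have h3 : |1 - a*b| ≤ 2*((a^2+1)*(b^2+1)) := by
    rw [abs_le]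
    constructor <;> nlinarith [sq_nonneg (a+b), sq_nonneg (a-b), sq_nonneg (a*b-1), sq_nonneg (a*b+1)]
  nlinarith [abs_nonneg (a-b), abs_nonneg (1-a*b)]

lemma Pfun_lip (a b : ℝ) : |Pfun a - Pfun b| ≤ 11 * |a - b| := by
  calc |Pfun a - Pfun b| ≤ 8 * |Function.invFun vol a - Function.invFun vol b| :=
        pres_lip _ _
    _ ≤ 8 * ((4/3) * |a - b|) := by
        have := invFun_vol_lip a b
        linarith
    _ ≤ 11 * |a - b| := by have := abs_nonneg (a - b); linarith

lemma Pfun_zero : Pfun 0 = 0 := by simp [Pfun, invFun_vol_zero, pres]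

lemma pres_nonneg {h : ℝ} (hh : 0 ≤ h) : 0 ≤ pres h := by
  unfold pres; positivity

lemma invFun_vol_nonneg {a : ℝ} (ha : 0 ≤ a) : 0 ≤ Function.invFun vol a := by
  by_contra hlt
  push_neg at hlt
  have := vol_strictMono hlt
  rw [vol_invFun_eq, vol_zero] at this
  linarith

lemma invFun_vol_pos {a : ℝ} (ha : 0 < a) : 0 < Function.invFun vol a := by
  rcases lt_or_eq_of_le (invFun_vol_nonneg ha.le) with h | h
  · exact h
  · exfalso
    have h2 : vol (Function.invFun vol a) = a := vol_invFun_eq a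
    rw [← h, vol_zero] at h2
    linarith

lemma Pfun_nonneg {a : ℝ} (ha : 0 ≤ a) : 0 ≤ Pfun a := pres_nonneg (invFun_vol_nonneg ha)

lemma Pfun_pos {a : ℝ} (ha : 0 < a) : 0 < Pfun a := by
  have hx := invFun_vol_pos ha
  unfold Pfun pres
  positivity

lemma invFun_vol_nonpos {a : ℝ} (ha : a ≤ 0) : Function.invFun vol a ≤ 0 := by
  by_contra hlt
  push_neg at hlt
  have := vol_strictMono hlt
  rw [vol_invFun_eq, vol_zero] at this
  linarith

lemma Pfun_nonpos {a : ℝ} (ha : a ≤ 0) : Pfun a ≤ 0 := by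
  have hx := invFun_vol_nonpos ha
  unfold Pfun pres
  have hden : (0:ℝ) < (Function.invFun vol a)^2 + 1 := by positivity
  exact div_nonpos_of_nonpos_of_nonneg (by linarith) hden.le

lemma Ds_zero_arg (s : ℝ) : Ds s 0 = 0 := by simp [Ds, Real.sign_zero]

lemma Ds_nonneg {s x : ℝ} (hx : 0 ≤ x) : 0 ≤ Ds s x := by
  rcases lt_or_eq_of_le hx with h | h
  · exact mul_nonneg (Real.rpow_nonneg (abs_nonneg x) s) (by rw [Real.sign_of_pos h]; norm_num)
  · rw [← h, Ds_zero_arg]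

lemma Ds_pos {s x : ℝ} (hx : 0 < x) : 0 < Ds s x := by
  rw [Ds, Real.sign_of_pos hx, mul_one]
  exact Real.rpow_pos_of_pos (abs_pos.mpr hx.ne') s

lemma Ds_odd (s x : ℝ) : Ds s (-x) = - Ds s x := by
  rw [Ds, Ds, abs_neg, Real.sign_neg]; ring

lemma neg_Ds_le {s : ℝ} (hs : 0 < s) (x : ℝ) : -Ds s x ≤ (max (-x) 0) ^ s := by
  rcases lt_trichotomy x 0 with h | h | h
  · rw [Ds, Real.sign_of_neg h, mul_neg_one, neg_neg, max_eq_left (by linarith),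
      abs_of_neg h]
  · simp [h, Ds_zero_arg, Real.zero_rpow hs.ne']
  · have h1 : 0 < Ds s x := Ds_pos h
    have h2 : (0:ℝ) ≤ (max (-x) 0) ^ s := Real.rpow_nonneg (le_max_right _ _) s
    linarith

lemma slope_bound_aux {A dj mj e0 W : ℝ} (hA : 0 < A) (h1 : (dj - e0) * A < W)
    (h2 : -dj ≤ mj) : -W ≤ A * (mj + e0) := by nlinarith

lemma pair_sum_zero {s : ℝ} {N : ℕ} (c : Fin N → Fin N → ℝ) (P : Fin N → ℝ)
    (hsymm : ∀ i j, c i j = c j i) :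
    ∑ j, ∑ i, c i j * Ds s (P i - P j) = 0 := by
  have h : ∑ j, ∑ i, c i j * Ds s (P i - P j)
      = - ∑ j, ∑ i, c i j * Ds s (P i - P j) := by
    nth_rewrite 1 [Finset.sum_comm]
    rw [← Finset.sum_neg_distrib]
    refine Finset.sum_congr rfl fun j _ => ?_
    rw [← Finset.sum_neg_distrib]
    refine Finset.sum_congr rfl fun i _ => ?_
    rw [hsymm i j, ← neg_sub (P j) (P i), Ds_odd]
    ring
  linarith

set_option maxHeartbeats 2000000 in
theorem stmt11 (N : ℕ) (hN : 2 ≤ N) (s : ℝ) (hs : 0 < s)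
    (c : Fin N → Fin N → ℝ)
    (hsymm : ∀ i j, c i j = c j i)
    (hnonneg : ∀ i j, 0 ≤ c i j)
    (hdiag : ∀ i, c i i = 0)
    (hconn : (SimpleGraph.fromRel (fun i j => 0 < c i j)).Connected)
    (hcase : 1 ≤ s ∨ ∀ i j, i ≠ j → 0 < c i j)
    (Vbar : ℝ) (hVbar : 0 < Vbar)
    (V : ℝ → Fin N → ℝ)
    (hsol : ∀ t ∈ Set.Ici (0 : ℝ), ∀ j, HasDerivWithinAt (fun τ => V τ j)
      (∑ i, c i j * Ds s (Pfun (V t i) - Pfun (V t j))) (Set.Ici (0 : ℝ)) t)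
    (hinit : ∀ j, 0 ≤ V 0 j)
    (hmean : (1 / (N : ℝ)) * ∑ j, V 0 j = Vbar) :
    ∀ t ∈ Set.Ici (0 : ℝ), ∀ j, 0 ≤ V t j := by
  by_contra hbad
  push_neg at hbad
  obtain ⟨t₁, ht₁, j₁, hj₁⟩ := hbad
  -- the set of "bad" times
  set B : Set ℝ := {t | 0 ≤ t ∧ ∃ j, V t j < 0} with hBdef
  have hBne : B.Nonempty := ⟨t₁, ht₁, j₁, hj₁⟩
  have hBbd : BddBelow B := ⟨0, fun t ht => ht.1⟩
  set t0 : ℝ := sInf B with ht0def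
  have ht0 : 0 ≤ t0 := le_csInf hBne (fun t ht => ht.1)
  have ht0Ici : t0 ∈ Set.Ici (0:ℝ) := ht0
  have hcontV : ∀ j, ContinuousOn (fun τ => V τ j) (Set.Ici (0:ℝ)) :=
    fun j t ht => (hsol t ht j).continuousWithinAt
  -- goodness strictly below t0
  have hgood_lt : ∀ t, 0 ≤ t → t < t0 → ∀ j, 0 ≤ V t j := by
    intro t ht htlt j
    by_contra h
    push_neg at h
    exact absurd (csInf_le hBbd ⟨ht, j, h⟩) (not_le.mpr htlt)
  -- t0 itself is good
  have hgood0 : ∀ j, 0 ≤ V t0 j := by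
    intro j
    by_contra h
    push_neg at h
    rcases eq_or_lt_of_le ht0 with h0 | h0
    · exact absurd h (not_lt.mpr (by rw [← h0]; exact hinit j))
    · have hev : ∀ᶠ z in nhdsWithin t0 (Set.Ici 0), V z j < 0 :=
        ((hsol t0 ht0Ici j).continuousWithinAt).eventually_lt_const h
      rw [Filter.eventually_iff, Metric.mem_nhdsWithin_iff] at hev
      obtain ⟨ε, hε, hsub⟩ := hev
      set t := t0 - min (ε/2) (t0/2) with htdef
      have htmin : 0 < min (ε/2) (t0/2) := lt_min (by linarith) (by linarith)
      have ht1 : 0 ≤ t := by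
        have : min (ε/2) (t0/2) ≤ t0/2 := min_le_right _ _
        simp only [htdef]; linarith
      have ht2 : t < t0 := by simp only [htdef]; linarith
      have htmem : t ∈ Metric.ball t0 ε ∩ Set.Ici 0 := by
        constructor
        · rw [Metric.mem_ball]
          have : |t - t0| = min (ε/2) (t0/2) := by
            rw [htdef]; rw [abs_of_nonpos (by linarith)]; ring
          rw [Real.dist_eq, this]
          exact lt_of_le_of_lt (min_le_left _ _) (by linarith)
        · exact ht1
      have : V t j < 0 := hsub htmem
      exact absurd this (not_lt.mpr (hgood_lt t ht1 ht2 j))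
  -- bad times accumulate from the right at t0
  have hfreq : ∃ᶠ z in nhdsWithin t0 (Set.Ioi t0), ∃ j, V z j < 0 := by
    rw [Filter.frequently_iff]
    intro U hU
    rw [mem_nhdsGT_iff_exists_Ioo_subset] at hU
    obtain ⟨u, hu, hsub⟩ := hU
    have hexb : ∃ b ∈ B, b < u := by
      by_contra h
      push_neg at h
      have : u ≤ t0 := le_csInf hBne h
      exact absurd hu (not_lt.mpr this)
    obtain ⟨b, hb, hbu⟩ := hexb
    have hbge : t0 ≤ b := csInf_le hBbd hb
    have hbne : t0 ≠ b := by
      intro h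
      obtain ⟨j, hj⟩ := hb.2
      rw [← h] at hj
      exact absurd hj (not_lt.mpr (hgood0 j))
    exact ⟨b, hsub ⟨lt_of_le_of_ne hbge hbne, hbu⟩, hb.2⟩
  have hIoiIci : Set.Ioi t0 ⊆ Set.Ici (0:ℝ) := fun z hz => le_trans ht0 (le_of_lt hz)
  have hmono : nhdsWithin t0 (Set.Ioi t0) ≤ nhdsWithin t0 (Set.Ici 0) :=
    nhdsWithin_mono t0 hIoiIci
  have hNpos : (0:ℝ) < N := by
    have : (0:ℕ) < N := by omega
    exact_mod_cast this
  rcases hcase with hs1 | hcomplete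
  · -- Grönwall case: s ≥ 1
    set B0 : ℝ := ∑ i, ∑ j, c i j with hB0def
    have hB0nn : 0 ≤ B0 :=
      Finset.sum_nonneg fun i _ => Finset.sum_nonneg fun j _ => hnonneg i j
    have hcle : ∀ i j, c i j ≤ B0 := by
      intro i j
      calc c i j ≤ ∑ j', c i j' :=
            Finset.single_le_sum (fun j' _ => hnonneg i j') (Finset.mem_univ j)
        _ ≤ B0 :=
            Finset.single_le_sum
              (f := fun i' => ∑ j', c i' j')
              (fun i' _ => Finset.sum_nonneg fun j' _ => hnonneg i' j') (Finset.mem_univ i)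
    set K2 : ℝ := N * (11 * B0) with hK2def
    -- choose a small interval to the right of t0 on which all V z j > -1/11
    have hev : ∀ᶠ z in nhdsWithin t0 (Set.Ici 0), ∀ j, -(1/11:ℝ) < V z j := by
      rw [Filter.eventually_all]
      intro j
      exact ((hsol t0 ht0Ici j).continuousWithinAt).eventually_const_lt
        (lt_of_lt_of_le (by norm_num) (hgood0 j))
    rw [Filter.eventually_iff, Metric.mem_nhdsWithin_iff] at hev
    obtain ⟨ε, hε, hsub⟩ := hev
    set b : ℝ := t0 + ε/2 with hbdef
    have hb : t0 < b := by simp only [hbdef]; linarith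
    have hballmem : ∀ z ∈ Set.Icc t0 b, ∀ j, -(1/11:ℝ) < V z j := by
      intro z hz j
      refine hsub ⟨?_, le_trans ht0 hz.1⟩ j
      rw [Metric.mem_ball, Real.dist_eq, abs_of_nonneg (by linarith [hz.1])]
      have := hz.2
      simp only [hbdef] at this
      linarith
    have hIccIci : Set.Icc t0 b ⊆ Set.Ici (0:ℝ) := fun z hz => le_trans ht0 hz.1
    -- the deficiency function
    set f : ℝ → ℝ := fun τ => ∑ j, max (-(V τ j)) 0 with hfdef
    have hfnn : ∀ τ, 0 ≤ f τ :=
      fun τ => Finset.sum_nonneg fun j _ => le_max_right _ _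
    have hfc : ContinuousOn f (Set.Icc t0 b) := by
      apply continuousOn_finset_sum
      intro j _
      exact (((hcontV j).mono hIccIci).neg).sup continuousOn_const
    have hft0 : f t0 = 0 := by
      apply Finset.sum_eq_zero
      intro j _
      exact max_eq_right (neg_nonpos.mpr (hgood0 j))
    -- the liminf-slope Grönwall hypothesis
    have hf' : ∀ x ∈ Set.Ico t0 b, ∀ r, K2 * f x < r →
        ∃ᶠ z in nhdsWithin x (Set.Ioi x), (z - x)⁻¹ * (f z - f x) < r := by
      intro x hx r hr
      have hx0 : (0:ℝ) ≤ x := le_trans ht0 hx.1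
      have hxIci : x ∈ Set.Ici (0:ℝ) := hx0
      have hxIcc : x ∈ Set.Icc t0 b := ⟨hx.1, le_of_lt hx.2⟩
      set ε0 : ℝ := (r - K2 * f x) / (N + 1) with hε0def
      have hε0 : 0 < ε0 := by
        apply div_pos (by linarith) (by linarith)
      set d : Fin N → ℝ :=
        fun j => ∑ i, c i j * Ds s (Pfun (V x i) - Pfun (V x j)) with hddef
      set μ : Fin N → ℝ := fun j => if 0 < V x j then 0 else max (-(d j)) 0 with hμdef
      have hμnn : ∀ j, 0 ≤ μ j := by
        intro j
        simp only [hμdef]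
        split
        · exact le_refl 0
        · exact le_max_right _ _
      -- key bound on μ
      have hμle : ∀ j, μ j ≤ 11 * B0 * f x := by
        intro j
        have hRHS : 0 ≤ 11 * B0 * f x := by positivity
        simp only [hμdef]
        split
        · exact hRHS
        · next hVj0 =>
          push_neg at hVj0
          apply max_le _ hRHS
          have hterm : ∀ i, -(c i j * Ds s (Pfun (V x i) - Pfun (V x j)))
              ≤ B0 * (11 * max (-(V x i)) 0) := by
            intro i
            set ui : ℝ := max (-(V x i)) 0 with huidef
            have huinn : 0 ≤ ui := le_max_right _ _
            have h1 : max (Pfun (V x j) - Pfun (V x i)) 0 ≤ 11 * ui := by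
              apply max_le _ (by positivity)
              rcases le_or_gt 0 (V x i) with hi | hi
              · have ha1 := Pfun_nonneg hi
                have ha2 := Pfun_nonpos hVj0
                linarith
              · have hlip := Pfun_lip 0 (V x i)
                rw [Pfun_zero] at hlip
                have habs : |(0:ℝ) - V x i| = -(V x i) := by
                  rw [abs_of_pos (by linarith)]; ring
                rw [habs] at hlip
                have h2 : Pfun (V x j) ≤ 0 := Pfun_nonpos hVj0
                have h3 : -Pfun (V x i) ≤ |0 - Pfun (V x i)| := by
                  rw [zero_sub]; exact le_abs_self _
                have h4 : -(V x i) ≤ ui := le_max_left _ _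
                have h5 : (0:ℝ) ≤ -(V x i) := by linarith
                nlinarith
            have h2 : 11 * ui ≤ 1 := by
              have := hballmem x hxIcc i
              have h6 : -(V x i) ≤ 1/11 := by linarith
              have : ui ≤ 1/11 := max_le h6 (by norm_num)
              linarith
            have h3 : -Ds s (Pfun (V x i) - Pfun (V x j))
                ≤ (max (Pfun (V x j) - Pfun (V x i)) 0) ^ s := by
              have := neg_Ds_le hs (Pfun (V x i) - Pfun (V x j))
              rwa [neg_sub] at this
            have h4 : (max (Pfun (V x j) - Pfun (V x i)) 0 : ℝ) ^ s ≤ (11 * ui) ^ s :=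
              Real.rpow_le_rpow (le_max_right _ _) h1 hs.le
            have h5 : ((11 * ui : ℝ)) ^ s ≤ 11 * ui := by
              rcases eq_or_lt_of_le (by positivity : (0:ℝ) ≤ 11 * ui) with h | h
              · rw [← h, Real.zero_rpow (by linarith : s ≠ 0)]
              · calc ((11 * ui : ℝ)) ^ s ≤ (11 * ui) ^ (1:ℝ) :=
                    Real.rpow_le_rpow_of_exponent_ge h h2 hs1
                  _ = 11 * ui := Real.rpow_one _
            have h6 : -Ds s (Pfun (V x i) - Pfun (V x j)) ≤ 11 * ui := by linarith
            have h7 : 0 ≤ c i j := hnonneg i j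
            have h8 : c i j ≤ B0 := hcle i j
            have ha := mul_le_mul_of_nonneg_left h6 h7
            have hb := mul_le_mul_of_nonneg_right h8 (by positivity : (0:ℝ) ≤ 11 * ui)
            have hc' : c i j * -Ds s (Pfun (V x i) - Pfun (V x j))
                = -(c i j * Ds s (Pfun (V x i) - Pfun (V x j))) := by ring
            rw [hc'] at ha
            linarith
          calc -(d j) = ∑ i, -(c i j * Ds s (Pfun (V x i) - Pfun (V x j))) := by
                simp only [hddef]; rw [← Finset.sum_neg_distrib]
            _ ≤ ∑ i, B0 * (11 * max (-(V x i)) 0) :=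
                Finset.sum_le_sum fun i _ => hterm i
            _ = 11 * B0 * f x := by
                simp only [hfdef]; rw [Finset.mul_sum]; apply Finset.sum_congr rfl
                intro i _; ring
      -- eventual per-component slope estimate
      have hj_ev : ∀ j, ∀ᶠ z in nhdsWithin x (Set.Ioi x),
          max (-(V z j)) 0 - max (-(V x j)) 0 ≤ (z - x) * (μ j + ε0) := by
        intro j
        have hslope : Filter.Tendsto (slope (fun τ => V τ j) x)
            (nhdsWithin x (Set.Ioi x)) (nhds (d j)) := by
          have h1 := (hsol x hxIci j).mono (Set.Ici_subset_Ici.mpr hx0)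
          rw [hasDerivWithinAt_iff_tendsto_slope] at h1
          rwa [Set.Ici_sdiff_left] at h1
        by_cases hpos : 0 < V x j
        · have hμj : μ j = 0 := by simp only [hμdef]; rw [if_pos hpos]
          have hcont : Filter.Tendsto (fun z => V z j)
              (nhdsWithin x (Set.Ioi x)) (nhds (V x j)) :=
            ((hsol x hxIci j).continuousWithinAt).tendsto.mono_left
              (nhdsWithin_mono x (fun z hz => le_trans hx0 (le_of_lt hz)))
          have h1 : ∀ᶠ z in nhdsWithin x (Set.Ioi x), 0 < V z j :=
            hcont.eventually (eventually_gt_nhds hpos)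
          filter_upwards [h1, self_mem_nhdsWithin] with z hz1 hz2
          rw [max_eq_right (neg_nonpos.mpr hz1.le), max_eq_right (neg_nonpos.mpr hpos.le),
            hμj]
          have : (0:ℝ) < z - x := sub_pos.mpr hz2
          nlinarith
        · have hμj : μ j = max (-(d j)) 0 := by simp only [hμdef]; rw [if_neg hpos]
          have h1 : ∀ᶠ z in nhdsWithin x (Set.Ioi x),
              d j - ε0 < slope (fun τ => V τ j) x z :=
            hslope.eventually (eventually_gt_nhds (by linarith))
          filter_upwards [h1, self_mem_nhdsWithin] with z hz1 hz2
          have hzx : (0:ℝ) < z - x := sub_pos.mpr hz2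
          rw [slope_def_field] at hz1
          have e1 : (d j - ε0) * (z - x) < V z j - V x j := by
            rw [← lt_div_iff₀ hzx]; exact hz1
          have h3 : V x j - V z j ≤ (z - x) * (μ j + ε0) := by
            rw [hμj]
            have := slope_bound_aux hzx e1 (le_max_left (-(d j)) 0)
            linarith
          have hRHSnn : 0 ≤ (z - x) * (μ j + ε0) := by
            apply mul_nonneg hzx.le
            have := hμnn j
            linarith
          have h4 : max (-(V z j)) 0 - max (-(V x j)) 0 ≤ max (V x j - V z j) 0 := by
            have ha : -(V z j) ≤ max (-(V x j)) 0 + max (V x j - V z j) 0 := by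
              have := le_max_left (-(V x j)) (0:ℝ)
              have := le_max_left (V x j - V z j) (0:ℝ)
              linarith
            have hb0 : (0:ℝ) ≤ max (-(V x j)) 0 + max (V x j - V z j) 0 := by
              have := le_max_right (-(V x j)) (0:ℝ)
              have := le_max_right (V x j - V z j) (0:ℝ)
              linarith
            have := max_le ha hb0
            linarith
          have h5 : max (V x j - V z j) 0 ≤ (z - x) * (μ j + ε0) := max_le h3 hRHSnn
          linarith
      -- combine
      apply Filter.Eventually.frequently
      have hA : ∀ᶠ z in nhdsWithin x (Set.Ioi x), ∀ j,
          max (-(V z j)) 0 - max (-(V x j)) 0 ≤ (z - x) * (μ j + ε0) :=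
        Filter.eventually_all.mpr hj_ev
      filter_upwards [hA, self_mem_nhdsWithin] with z hz1 hz2
      have hzx : (0:ℝ) < z - x := sub_pos.mpr hz2
      have hsum : f z - f x ≤ (z - x) * (∑ j : Fin N, (μ j + ε0)) := by
        calc f z - f x = ∑ j, (max (-(V z j)) 0 - max (-(V x j)) 0) := by
              simp only [hfdef]; rw [← Finset.sum_sub_distrib]
          _ ≤ ∑ j, (z - x) * (μ j + ε0) := Finset.sum_le_sum fun j _ => hz1 j
          _ = (z - x) * ∑ j, (μ j + ε0) := by rw [← Finset.mul_sum]
      have hS : ∑ j : Fin N, (μ j + ε0) < r := by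
        rw [Finset.sum_add_distrib, Finset.sum_const, Finset.card_univ, Fintype.card_fin,
          nsmul_eq_mul]
        have h1 : ∑ j, μ j ≤ K2 * f x := by
          calc ∑ j, μ j ≤ ∑ _j : Fin N, 11 * B0 * f x :=
                Finset.sum_le_sum fun j _ => hμle j
            _ = N * (11 * B0 * f x) := by
                rw [Finset.sum_const, Finset.card_univ, Fintype.card_fin, nsmul_eq_mul]
            _ = K2 * f x := by rw [hK2def]; ring
        have h3 : ((N:ℝ) + 1) * ε0 = r - K2 * f x := by
          rw [hε0def]; field_simp
        nlinarith
      rw [inv_mul_eq_div, div_lt_iff₀ hzx]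
      calc f z - f x ≤ (z - x) * (∑ j : Fin N, (μ j + ε0)) := hsum
        _ < (z - x) * r := by
            apply mul_lt_mul_of_pos_left hS hzx
        _ = r * (z - x) := by ring
    -- apply Grönwall
    have hgr := le_gronwallBound_of_liminf_deriv_right_le (f := f)
      (f' := fun τ => K2 * f τ) (δ := 0) (K := K2) (ε := 0) (a := t0) (b := b)
      hfc hf' (le_of_eq hft0) (fun x _ => by rw [add_zero])
    have hzero : ∀ z ∈ Set.Icc t0 b, f z = 0 := by
      intro z hz
      have := hgr z hz
      rw [gronwallBound_ε0_δ0] at this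
      exact le_antisymm this (hfnn z)
    have hgoodI : ∀ z ∈ Set.Icc t0 b, ∀ j, 0 ≤ V z j := by
      intro z hz j
      have h1 := hzero z hz
      have h2 : ∀ i ∈ Finset.univ, (0:ℝ) ≤ max (-(V z i)) 0 :=
        fun i _ => le_max_right _ _
      have h3 := (Finset.sum_eq_zero_iff_of_nonneg h2).mp h1 j (Finset.mem_univ j)
      have h4 : -(V z j) ≤ 0 := by
        by_contra h
        push_neg at h
        rw [max_eq_left h.le] at h3
        linarith
      linarith
    have hIoo : Set.Ioo t0 b ∈ nhdsWithin t0 (Set.Ioi t0) :=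
      Ioo_mem_nhdsGT_of_mem ⟨le_refl t0, hb⟩
    obtain ⟨z, ⟨⟨j, hj⟩, hzIoo⟩⟩ :=
      (hfreq.and_eventually (Filter.eventually_of_mem hIoo (fun z hz => hz))).exists
    exact absurd hj (not_lt.mpr (hgoodI z ⟨hzIoo.1.le, hzIoo.2.le⟩ j))
  · -- complete-network case
    -- pick a component that is bad frequently just after t0
    have hpigeon : ∃ j0, ∃ᶠ z in nhdsWithin t0 (Set.Ioi t0), V z j0 < 0 := by
      by_contra h
      push_neg at h
      have h2 : ∀ᶠ z in nhdsWithin t0 (Set.Ioi t0), ∀ j, ¬ (V z j < 0) :=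
        Filter.eventually_all.mpr fun j => (h j).mono fun z hz => by simpa using hz
      obtain ⟨z, ⟨j, hj⟩, hz⟩ := (hfreq.and_eventually h2).exists
      exact hz j hj
    obtain ⟨j0, hfreqj0⟩ := hpigeon
    have htendj0 : Filter.Tendsto (fun z => V z j0) (nhdsWithin t0 (Set.Ioi t0))
        (nhds (V t0 j0)) :=
      ((hsol t0 ht0Ici j0).continuousWithinAt).tendsto.mono_left hmono
    have hj00 : V t0 j0 = 0 := by
      refine le_antisymm ?_ (hgood0 j0)
      by_contra h
      push_neg at h
      have hev : ∀ᶠ z in nhdsWithin t0 (Set.Ioi t0), 0 < V z j0 :=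
        htendj0.eventually (eventually_gt_nhds h)
      obtain ⟨z, hz1, hz2⟩ := (hfreqj0.and_eventually hev).exists
      linarith
    -- conservation of total volume
    have hsum0 : ∑ j, V 0 j = N * Vbar := by
      have hNne : (N:ℝ) ≠ 0 := ne_of_gt hNpos
      field_simp at hmean
      linarith
    have hTotDeriv : ∀ t ∈ Set.Ici (0:ℝ),
        HasDerivWithinAt (fun τ => ∑ j, V τ j) 0 (Set.Ici 0) t := by
      intro t ht
      have h1 := HasDerivWithinAt.fun_sum (fun j (_ : j ∈ Finset.univ) => hsol t ht j)
      rwa [pair_sum_zero c (fun i => Pfun (V t i)) hsymm] at h1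
    have hconst : ∑ j, V t0 j = ∑ j, V 0 j := by
      have hcontT : ContinuousOn (fun τ => ∑ j, V τ j) (Set.Icc 0 t0) := by
        apply continuousOn_finset_sum
        intro j _
        exact (hcontV j).mono Set.Icc_subset_Ici_self
      have hderivT : ∀ x ∈ Set.Ico 0 t0,
          HasDerivWithinAt (fun τ => ∑ j, V τ j) 0 (Set.Ici x) x :=
        fun x hx => (hTotDeriv x hx.1).mono (Set.Ici_subset_Ici.mpr hx.1)
      exact constant_of_has_deriv_right_zero hcontT hderivT t0 ⟨ht0, le_refl t0⟩
    have hExPos : ∃ i0, 0 < V t0 i0 := by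
      by_contra h
      push_neg at h
      have h1 : ∑ j, V t0 j ≤ 0 := Finset.sum_nonpos fun j _ => h j
      rw [hconst, hsum0] at h1
      nlinarith
    obtain ⟨i0, hi0⟩ := hExPos
    have hne : i0 ≠ j0 := by
      intro h
      rw [h, hj00] at hi0
      exact lt_irrefl 0 hi0
    -- the derivative of V · j0 at t0 is strictly positive
    set dd : ℝ := ∑ i, c i j0 * Ds s (Pfun (V t0 i) - Pfun (V t0 j0)) with hdddef
    have hdd : 0 < dd := by
      apply Finset.sum_pos'
      · intro i _
        apply mul_nonneg (hnonneg i j0)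
        apply Ds_nonneg
        rw [hj00, Pfun_zero, sub_zero]
        exact Pfun_nonneg (hgood0 i)
      · refine ⟨i0, Finset.mem_univ i0, ?_⟩
        apply mul_pos (hcomplete i0 j0 hne)
        apply Ds_pos
        rw [hj00, Pfun_zero, sub_zero]
        exact Pfun_pos hi0
    have hD : HasDerivWithinAt (fun τ => V τ j0) dd (Set.Ici t0) t0 :=
      (hsol t0 ht0Ici j0).mono (Set.Ici_subset_Ici.mpr ht0)
    rw [hasDerivWithinAt_iff_tendsto_slope, Set.Ici_sdiff_left] at hD
    have hev : ∀ᶠ z in nhdsWithin t0 (Set.Ioi t0),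
        0 < slope (fun τ => V τ j0) t0 z :=
      hD.eventually (eventually_gt_nhds hdd)
    obtain ⟨z, ⟨hz1, hz2⟩, hz3⟩ :=
      ((hfreqj0.and_eventually hev).and_eventually self_mem_nhdsWithin).exists
    rw [slope_def_field] at hz2
    have hzt : (0:ℝ) < z - t0 := sub_pos.mpr hz3
    have h6 : 0 < V z j0 - V t0 j0 := by
      rcases div_pos_iff.mp hz2 with ⟨h, _⟩ | ⟨_, h⟩
      · exact h
      · linarith
    rw [hj00] at h6
    linarith
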